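/- Let (Γ, A) be an E-GCM graph that is unital ON-cyclic (the product of scalars K along every ON-cycle equals 1). Then for every ON-path 𝒫 in (Γ, A) there exists a simple ON-path 𝒬 with the same start and end nodes such that Π_𝒬 = Π_𝒫. -/

import Mathlib

open Real

variable {n : ℕ}

/-- E-generalized Cartan matrix: diagonal entries 2, off-diagonal entries nonpositive,
`a_{ij} = 0 ↔ a_{ji} = 0`, and each off-diagonal product is `≥ 4` or of the form
`4cos²(π/k)` for an integer `k ≥ 2`. -/
def IsEGCM (A : Fin n → Fin n → ℝ) : Prop :=
  (∀ i, A i i = 2) ∧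
  (∀ i j, i ≠ j → A i j ≤ 0) ∧
  (∀ i j, A i j = 0 → A j i = 0) ∧
  (∀ i j, i ≠ j → A i j * A j i ≥ 4 ∨
    ∃ k : ℕ, 2 ≤ k ∧ A i j * A j i = 4 * (Real.cos (Real.pi / k)) ^ 2)

/-- The Coxeter exponent `m_{ij}` (with `0` encoding `∞`). -/
noncomputable def mval (A : Fin n → Fin n → ℝ) (i j : Fin n) : ℕ :=
  open scoped Classical in
  if h : ∃ k : ℕ, 2 ≤ k ∧ A i j * A j i = 4 * (Real.cos (Real.pi / k)) ^ 2
  then h.choose else 0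

/-- The generating "reflection" `S_i(v) = v - 2B(α_i, v)α_i` where `B(α_i, α_j) = a_{ij}/2`
and the simple roots `α_i` are the standard basis vectors of `Fin n → ℝ`. -/
noncomputable def S (A : Fin n → Fin n → ℝ) (i : Fin n) : Function.End (Fin n → ℝ) :=
  fun v => v - (∑ j, A i j * v j) • (Pi.single i (1 : ℝ) : Fin n → ℝ)

/-- The representing group `σ(W)`, as the monoid generated by the reflections `S_i`
(each `S_i` is an involution, so this is a group of transformations). -/
noncomputable def Wgrp (A : Fin n → Fin n → ℝ) : Submonoid (Function.End (Fin n → ℝ)) :=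
  Submonoid.closure (Set.range (S A))

/-- The simple root `α_i`. -/
noncomputable def simple (i : Fin n) : Fin n → ℝ := Pi.single i 1

/-- The root system `Φ = {w.α_i}`. -/
noncomputable def Phi (A : Fin n → Fin n → ℝ) : Set (Fin n → ℝ) :=
  {v | ∃ w ∈ Wgrp A, ∃ i, w (simple i) = v}

/-- Positive roots. -/
noncomputable def PhiPos (A : Fin n → Fin n → ℝ) : Set (Fin n → ℝ) :=
  {v | v ∈ Phi A ∧ ∀ j, 0 ≤ v j}

/-- Negative roots. -/
noncomputable def PhiNeg (A : Fin n → Fin n → ℝ) : Set (Fin n → ℝ) :=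
  {v | v ∈ Phi A ∧ ∀ j, v j ≤ 0}

/-- `𝔖(α)`: the positive roots which are real scalar multiples of `α`. -/
noncomputable def Sfrak (A : Fin n → Fin n → ℝ) (α : Fin n → ℝ) : Set (Fin n → ℝ) :=
  {β | β ∈ PhiPos A ∧ ∃ K : ℝ, β = K • α}

/-- `N(w)`: the positive roots sent to negative roots by `w`. -/
noncomputable def Nset (A : Fin n → Fin n → ℝ) (w : Function.End (Fin n → ℝ)) :
    Set (Fin n → ℝ) :=
  {α | α ∈ PhiPos A ∧ w α ∈ PhiNeg A}

/-- The Coxeter length of `w`: the least length of a word in the generators `S_i`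
representing `w`. -/
noncomputable def len (A : Fin n → Fin n → ℝ) (w : Function.End (Fin n → ℝ)) : ℕ :=
  sInf {p | ∃ l : List (Fin n), l.length = p ∧ (l.map (S A)).prod = w}

/-- `γ_i` and `γ_j` are odd neighbors: `m_{ij}` is odd (in particular finite). -/
def OddNbr (A : Fin n → Fin n → ℝ) (i j : Fin n) : Prop := i ≠ j ∧ Odd (mval A i j)

/-- The scalar `K_{ji} = -a_{ji}/(2cos(π/m_{ij}))`. -/
noncomputable def Kval (A : Fin n → Fin n → ℝ) (j i : Fin n) : ℝ :=
  -(A j i) / (2 * Real.cos (Real.pi / (mval A j i)))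

/-- The scalar `Π_𝒫` attached to an ON-path `𝒫`: the product of the `K`'s along its steps. -/
noncomputable def pathProd (A : Fin n → Fin n → ℝ) : List (Fin n) → ℝ
  | [] => 1
  | [_] => 1
  | i :: j :: t => Kval A j i * pathProd A (j :: t)

/-- An ON-path: consecutive nodes are odd neighbors. -/
def IsONPath (A : Fin n → Fin n → ℝ) (l : List (Fin n)) : Prop := l.Chain' (OddNbr A)

/-- An ON-cycle: an ON-path of nonzero length whose start and end nodes coincide. -/
def IsONCycle (A : Fin n → Fin n → ℝ) (l : List (Fin n)) : Prop :=
  IsONPath A l ∧ 2 ≤ l.length ∧ l.head? = l.getLast?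

/-- `(Γ, A)` is unital ON-cyclic: `Π_𝒞 = 1` for every ON-cycle `𝒞`. -/
def UnitalONCyclic (A : Fin n → Fin n → ℝ) : Prop :=
  ∀ l : List (Fin n), IsONCycle A l → pathProd A l = 1

private lemma pathProd_append (A : Fin n → Fin n → ℝ) :
    ∀ (l1 : List (Fin n)) (v : Fin n) (l2 : List (Fin n)),
      pathProd A (l1 ++ v :: l2) = pathProd A (l1 ++ [v]) * pathProd A (v :: l2)
  | [], v, l2 => by cases l2 <;> simp [pathProd]
  | [a], v, l2 => by cases l2 <;> simp [pathProd]
  | a :: b :: t, v, l2 => by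
      have ih := pathProd_append A (b :: t) v l2
      simp only [List.cons_append, List.append_eq, pathProd] at *
      rw [ih]; ring

private lemma exists_dup {α : Type*} :
    ∀ (l : List α), ¬ l.Nodup → ∃ (X : List α) (v : α) (Y Z : List α), l = X ++ v :: Y ++ v :: Z
  | [], h => absurd List.nodup_nil h
  | a :: t, h => by
      by_cases ha : a ∈ t
      · obtain ⟨Y, Z, rfl⟩ := List.append_of_mem ha
        exact ⟨[], a, Y, Z, rfl⟩
      · have ht : ¬ t.Nodup := fun hn => h (List.nodup_cons.2 ⟨ha, hn⟩)
        obtain ⟨X, v, Y, Z, rfl⟩ := exists_dup t ht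
        exact ⟨a :: X, v, Y, Z, rfl⟩

/-- if `(Γ, A)` is unital ON-cyclic, then every ON-path `𝒫` is
`Π`-equivalent to a simple ON-path `𝒬` (same start and end nodes, `Π_𝒬 = Π_𝒫`). -/
theorem stmt12 (A : Fin n → Fin n → ℝ) (hA : IsEGCM A) (hu : UnitalONCyclic A)
    (P : List (Fin n)) (hP : IsONPath A P) :
    ∃ Q : List (Fin n), IsONPath A Q ∧ Q.dropLast.Nodup ∧ Q.tail.Nodup ∧
      Q.head? = P.head? ∧ Q.getLast? = P.getLast? ∧ pathProd A Q = pathProd A P := by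
  suffices H : ∀ m (P : List (Fin n)), P.length ≤ m → IsONPath A P →
      ∃ Q : List (Fin n), IsONPath A Q ∧ Q.Nodup ∧
        Q.head? = P.head? ∧ Q.getLast? = P.getLast? ∧ pathProd A Q = pathProd A P by
    obtain ⟨Q, h1, h2, h3, h4, h5⟩ := H P.length P le_rfl hP
    exact ⟨Q, h1, h2.sublist (List.dropLast_sublist Q), h2.sublist (List.tail_sublist Q),
      h3, h4, h5⟩
  intro m
  induction m with
  | zero =>
    intro P hl _
    rw [Nat.le_zero, List.length_eq_zero_iff] at hl
    subst hl
    exact ⟨[], List.isChain_nil, List.nodup_nil, rfl, rfl, rfl⟩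
  | succ m ih =>
    intro P hl hP
    by_cases hnd : P.Nodup
    · exact ⟨P, hP, hnd, rfl, rfl, rfl⟩
    · obtain ⟨X, v, Y, Z, rfl⟩ := exists_dup P hnd
      -- P = (X ++ (v :: Y)) ++ (v :: Z)
      unfold IsONPath at hP
      rw [List.Chain', List.isChain_append] at hP
      obtain ⟨c1, c2, c3⟩ := hP
      rw [List.isChain_append] at c1
      obtain ⟨d1, d2, d3⟩ := c1
      have hP' : IsONPath A (X ++ v :: Z) := by
        unfold IsONPath
        rw [List.Chain', List.isChain_append]
        refine ⟨d1, c2, ?_⟩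
        intro x hx y hy
        simp only [List.head?_cons, Option.mem_def, Option.some.injEq] at hy
        subst hy
        exact d3 x hx v (by simp)
      have hcycC : IsONCycle A ((v :: Y) ++ [v]) := by
        refine ⟨?_, by simp, ?_⟩
        · unfold IsONPath
          rw [List.Chain', List.isChain_append]
          refine ⟨d2, List.isChain_singleton v, ?_⟩
          intro x hx y hy
          simp only [List.head?_cons, Option.mem_def, Option.some.injEq] at hy
          subst hy
          apply c3 x _ v (by simp)
          rwa [List.getLast?_append_cons]
        · rw [List.getLast?_concat]
          simp
      have hcyc : pathProd A ((v :: Y) ++ [v]) = 1 := hu _ hcycC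
      have hlen : (X ++ v :: Z).length ≤ m := by
        simp only [List.length_append, List.length_cons] at hl ⊢
        omega
      obtain ⟨Q, h1, h2, h3, h4, h5⟩ := ih (X ++ v :: Z) hlen hP'
      refine ⟨Q, h1, h2, ?_, ?_, ?_⟩
      · rw [h3]
        cases X <;> simp
      · rw [h4, List.getLast?_append_cons, List.getLast?_append_cons]
      · have e : (X ++ v :: Y) ++ v :: Z = X ++ v :: (Y ++ v :: Z) := by simp
        rw [h5, e, pathProd_append A X v (Y ++ v :: Z), pathProd_append A X v Z]
        have e2 : (v :: (Y ++ v :: Z)) = (v :: Y) ++ v :: Z := by simp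
        rw [e2, pathProd_append A (v :: Y) v Z, hcyc, one_mul]
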